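/- Define P_n(x) = det(ψ_{n+1}(t_1 t_2 ⋯ t_n) − I_n) for n ≥ 1 and P_0(x) = 1. Then for n ≥ 2, P_n(x) = −2 P_{n−1}(x) − x² P_{n−2}(x). -/

import Mathlib

open Matrix Polynomial

/-- Deformed Tits matrix `V_i` (generator index `i` is 1-based, `1 ≤ i ≤ m`):
the identity `m × m` matrix except column `i`, which has `-1` on the diagonal,
`y` in row `i-1` and `x` in row `i+1`. -/
def Vmat {R : Type*} [CommRing R] (x y : R) (m i : ℕ) : Matrix (Fin m) (Fin m) R :=
  Matrix.of fun r c =>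
    if (c : ℕ) + 1 = i then
      if (r : ℕ) + 1 = i then -1
      else if (r : ℕ) + 2 = i then y
      else if (r : ℕ) = i then x
      else 0
    else if r = c then 1 else 0

/-- The matrix `ψ_{n+1}(t_1 t_2 ⋯ t_n)`, the (ordered) product `V_1 V_2 ⋯ V_n`
of the deformed Tits matrices with `y = x`, over `ℤ[x]`. -/
noncomputable def psiWord (n : ℕ) : Matrix (Fin n) (Fin n) (Polynomial ℤ) :=
  (List.ofFn fun i : Fin n => Vmat (Polynomial.X : Polynomial ℤ) Polynomial.X n ((i : ℕ) + 1)).prod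

/-- `P_n(x) = det(ψ_{n+1}(t_1 ⋯ t_n) − I_n)` for `n ≥ 1`, and `P_0 = 1`. -/
noncomputable def Ppoly : ℕ → Polynomial ℤ
  | 0 => 1
  | (n+1) => Matrix.det (psiWord (n+1) - 1)


open Finset

noncomputable def qe (k r c : ℕ) : Polynomial ℤ :=
  if c < k then
    (if r = 0 then -X^c else if c+1 = r then X
     else if r ≤ c then X^(c-r+2) - X^(c-r) else 0)
  else if r = c then 1 else 0

noncomputable def ve (i r c : ℕ) : Polynomial ℤ :=
  if c + 1 = i then
    (if r + 1 = i then -1 else if r + 2 = i then X else if r = i then X else 0)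
  else if r = c then 1 else 0

lemma qe_self (k r : ℕ) : qe k r k = if r = k then 1 else 0 := by
  simp [qe]

lemma qe_lt (k r c : ℕ) (h : c < k) : qe k r c =
    if r = 0 then -X^c else if c+1 = r then X
    else if r ≤ c then X^(c-r+2) - X^(c-r) else 0 := by
  simp [qe, h]

lemma hX (a b : ℕ) (h : a + 1 = b) : X * (X : Polynomial ℤ)^a = X^b := by
  subst h; rw [pow_succ]; ring1

lemma key (n k r c : ℕ) (hk : k < n) (hr : r < n) (hc : c < n) :
    ∑ j ∈ Finset.range n, qe k r j * ve (k+1) j c = qe (k+1) r c := by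
  rcases eq_or_ne c k with rfl | hck
  · -- column c = k
    have hstep : ∀ j ∈ Finset.range n, qe c r j * ve (c+1) j c =
        (if j = c then -(qe c r c) else 0) +
        ((if j = c - 1 then (if 1 ≤ c then X * qe c r (c-1) else 0) else 0) +
         (if j = c + 1 then X * qe c r (c+1) else 0)) := by
      intro j hj
      simp only [ve, mem_range] at *
      split_ifs <;> first | omega | (subst_vars; ring1)
    rw [Finset.sum_congr rfl hstep, Finset.sum_add_distrib, Finset.sum_add_distrib,
      Finset.sum_ite_eq', Finset.sum_ite_eq', Finset.sum_ite_eq']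
    simp only [mem_range, hc, if_true, if_pos (by omega : c - 1 < n)]
    -- now a pure case analysis on r
    have hq1 : X * qe c r (c+1) = if r = c + 1 then X else 0 := by
      simp only [qe]
      split_ifs <;> first | omega | ring1
    rw [hq1]
    have hq2 : (if c+1 < n then (if r = c+1 then X else (0:Polynomial ℤ)) else 0)
        = if r = c+1 then X else 0 := by
      split_ifs <;> first | rfl | omega
    rw [hq2]
    rcases Nat.eq_zero_or_pos c with rfl | hcpos
    · rw [if_neg (by omega), qe_self, qe_lt _ _ _ (by omega)]
      split_ifs <;> first | omega | ring1
    · rw [if_pos (show 1 ≤ c from hcpos), qe_self, qe_lt _ _ _ (by omega),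
        qe_lt _ _ _ (by omega)]
      split_ifs <;>
        first
          | omega
          | ring1
          | (rw [mul_neg, hX (c-1) c (by omega)]; ring1)
          | (rw [mul_sub, hX (c-1-r+2) (c-r+2) (by omega), hX (c-1-r) (c-r) (by omega)]; ring1)
          | (rw [show c - r = 0 from by omega]; ring1)
  · -- other columns
    have hstep : ∀ j ∈ Finset.range n, qe k r j * ve (k+1) j c =
        if j = c then qe k r c else 0 := by
      intro j hj
      simp only [ve]
      split_ifs <;> first | omega | (subst_vars; ring1)
    rw [Finset.sum_congr rfl hstep, Finset.sum_ite_eq']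
    simp only [mem_range, hc, if_true]
    simp only [qe]
    split_ifs <;> first | rfl | omega

lemma Vmat_apply (n i : ℕ) (r c : Fin n) :
    Vmat (X : Polynomial ℤ) X n i r c = ve i (r : ℕ) (c : ℕ) := by
  simp only [Vmat, ve, Matrix.of_apply, Fin.ext_iff]

lemma prod_eq (n : ℕ) : ∀ k, k ≤ n →
    ((List.range k).map (fun i => Vmat (X : Polynomial ℤ) X n (i+1))).prod
      = Matrix.of (fun r c : Fin n => qe k (r : ℕ) (c : ℕ)) := by
  intro k
  induction k with
  | zero =>
    intro _
    ext r c
    simp [qe, Matrix.one_apply, Fin.ext_iff]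
  | succ k ih =>
    intro hk
    rw [List.range_succ, List.map_append, List.prod_append, ih (by omega)]
    refine Matrix.ext fun r c => ?_
    simp only [List.map_cons, List.map_nil, List.prod_cons, List.prod_nil, mul_one,
      Matrix.mul_apply, Matrix.of_apply]
    have : ∀ j : Fin n, qe k (r : ℕ) (j : ℕ) * Vmat (X : Polynomial ℤ) X n (k+1) j c
        = qe k (r : ℕ) (j : ℕ) * ve (k+1) (j : ℕ) (c : ℕ) := by
      intro j; rw [Vmat_apply]
    rw [Fintype.sum_congr _ _ this]
    rw [Fin.sum_univ_eq_sum_range (fun j => qe k (r : ℕ) j * ve (k+1) j (c : ℕ)) n]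
    exact key n k r c (by omega) r.isLt c.isLt

lemma psiWord_eq (n : ℕ) :
    psiWord n = Matrix.of (fun r c : Fin n => qe n (r : ℕ) (c : ℕ)) := by
  rw [psiWord, ← prod_eq n n le_rfl]
  congr 1
  rw [List.ofFn_eq_map, ← (show List.map Fin.val (List.finRange n) = List.range n from
    List.ext_getElem (by simp) (by simp)), List.map_map]
  rfl

noncomputable def te (r c : ℕ) : Polynomial ℤ :=
  if r = c then -2 else if r + 1 = c ∨ c + 1 = r then X else 0

noncomputable def we (r c : ℕ) : Polynomial ℤ :=
  if r ≤ c then X^(c-r) else 0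

noncomputable def Tmat (n : ℕ) : Matrix (Fin n) (Fin n) (Polynomial ℤ) :=
  Matrix.of fun r c => te (r : ℕ) (c : ℕ)

noncomputable def Wmat (n : ℕ) : Matrix (Fin n) (Fin n) (Polynomial ℤ) :=
  Matrix.of fun r c => we (r : ℕ) (c : ℕ)

lemma key2 (n r c : ℕ) (hr : r < n) (hc : c < n) :
    ∑ j ∈ Finset.range n, te r j * we j c = qe n r c - (if r = c then 1 else 0) := by
  have hstep : ∀ j ∈ Finset.range n, te r j * we j c =
      (if j = r then -2 * we r c else 0) +
      ((if j = r + 1 then X * we (r+1) c else 0) +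
       (if j = r - 1 then (if 1 ≤ r then X * we (r-1) c else 0) else 0)) := by
    intro j hj
    simp only [te]
    split_ifs <;> first | omega | (subst_vars; ring1) | (exfalso; omega)
  rw [Finset.sum_congr rfl hstep, Finset.sum_add_distrib, Finset.sum_add_distrib,
    Finset.sum_ite_eq', Finset.sum_ite_eq', Finset.sum_ite_eq']
  simp only [mem_range, hr, if_true, if_pos (show r - 1 < n by omega)]
  have h1 : (if r+1 < n then X * we (r+1) c else 0) = X * we (r+1) c := by
    simp only [we]
    split_ifs <;> first | rfl | omega | (exfalso; omega) | ring1
  rw [h1]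
  rcases Nat.eq_zero_or_pos r with rfl | hrpos
  · simp only [we, qe, if_neg (show ¬(1:ℕ) ≤ 0 by omega), if_pos hc]
    split_ifs <;>
      first
        | omega
        | ring1
        | (rw [hX (c-1) c (by omega)]; ring1)
        | (rw [show c - 0 = c from rfl]; ring1)
        | (rw [Nat.sub_zero, hX (c-(0+1)) c (by omega)]; ring1)
        | (subst_vars; ring1)
  · rw [if_pos (show 1 ≤ r from hrpos)]
    simp only [we, qe, if_pos hc]
    split_ifs <;>
      first
        | omega
        | ring1
        | (rw [hX (c-(r+1)) (c-r) (by omega), hX (c-(r-1)) (c-r+2) (by omega)]; ring1)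
        | (rw [show c - r = 0 from by omega, show c-(r-1) = 1 from by omega]; ring1)
        | (rw [show c-(r-1) = 0 from by omega]; ring1)

lemma factor (n : ℕ) :
    Tmat n * Wmat n = Matrix.of (fun r c : Fin n => qe n (r : ℕ) (c : ℕ)) - 1 := by
  refine Matrix.ext fun r c => ?_
  simp only [Matrix.mul_apply, Matrix.sub_apply, Matrix.of_apply, Tmat, Wmat,
    Matrix.one_apply]
  rw [Fin.sum_univ_eq_sum_range (fun j => te (r : ℕ) j * we j (c : ℕ)) n,
    key2 n r c r.isLt c.isLt]
  congr 1
  simp [Fin.ext_iff]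

lemma detW (n : ℕ) : (Wmat n).det = 1 := by
  rw [Matrix.det_of_upperTriangular]
  · refine Finset.prod_eq_one fun i _ => ?_
    simp [Wmat, we]
  · intro i j h
    have hj : (j : ℕ) < (i : ℕ) := h
    simp only [Wmat, Matrix.of_apply, we]
    rw [if_neg]
    omega

lemma Tsub (m : ℕ) :
    (Tmat (m+1)).submatrix Fin.succ Fin.succ = Tmat m := by
  refine Matrix.ext fun r c => ?_
  simp only [Matrix.submatrix_apply, Tmat, Matrix.of_apply, Fin.val_succ, te]
  split_ifs <;> first | rfl | omega

lemma detT_rec (m : ℕ) :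
    (Tmat (m+2)).det = -2 * (Tmat (m+1)).det - X^2 * (Tmat m).det := by
  rw [Matrix.det_succ_row_zero]
  rw [Fin.sum_univ_succ, Fin.sum_univ_succ]
  have hz : ∀ j : Fin m, (-1 : Polynomial ℤ)^((j.succ.succ : Fin (m+2)) : ℕ) *
      Tmat (m+2) 0 j.succ.succ *
      ((Tmat (m+2)).submatrix Fin.succ (j.succ.succ).succAbove).det = 0 := by
    intro j
    have : Tmat (m+2) 0 j.succ.succ = 0 := by
      simp only [Tmat, Matrix.of_apply, te, Fin.val_succ, Fin.val_zero]
      split_ifs <;> simp_all <;> omega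
    rw [this]; ring
  rw [Finset.sum_congr rfl (fun j _ => hz j), Finset.sum_const_zero, add_zero]
  have h00 : Tmat (m+2) 0 0 = -2 := by
    simp [Tmat, te]
  have h01 : Tmat (m+2) 0 (Fin.succ 0) = X := by
    simp only [Tmat, Matrix.of_apply, te, Fin.val_zero, Fin.val_succ]
    norm_num
  rw [h00, h01, Fin.succAbove_zero, Tsub]
  -- second minor
  have hminor : ((Tmat (m+2)).submatrix Fin.succ (Fin.succ (0 : Fin (m+1))).succAbove).det
      = X * (Tmat m).det := by
    rw [Matrix.det_succ_column_zero, Fin.sum_univ_succ]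
    have hz2 : ∀ i : Fin m, (-1 : Polynomial ℤ)^((i.succ : Fin (m+1)) : ℕ) *
        (Tmat (m+2)).submatrix Fin.succ (Fin.succ (0 : Fin (m+1))).succAbove i.succ 0 *
        (((Tmat (m+2)).submatrix Fin.succ (Fin.succ (0 : Fin (m+1))).succAbove).submatrix
          i.succ.succAbove Fin.succ).det = 0 := by
      intro i
      have : (Tmat (m+2)).submatrix Fin.succ (Fin.succ (0 : Fin (m+1))).succAbove i.succ 0 = 0 := by
        have hs : (Fin.succ (0 : Fin (m+1))).succAbove (0 : Fin (m+1)) = 0 := by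
          apply Fin.succAbove_of_castSucc_lt
          simp [Fin.lt_def]
        rw [Matrix.submatrix_apply, hs]
        simp only [Tmat, Matrix.of_apply, te, Fin.val_succ, Fin.val_zero]
        split_ifs <;> simp_all <;> omega
      rw [this]; ring
    rw [Finset.sum_congr rfl (fun i _ => hz2 i), Finset.sum_const_zero, add_zero]
    have hent : (Tmat (m+2)).submatrix Fin.succ (Fin.succ (0 : Fin (m+1))).succAbove 0 0 = X := by
      have hs : (Fin.succ (0 : Fin (m+1))).succAbove (0 : Fin (m+1)) = 0 := by
        apply Fin.succAbove_of_castSucc_lt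
        simp [Fin.lt_def]
      rw [Matrix.submatrix_apply, hs]
      simp only [Tmat, Matrix.of_apply, te, Fin.val_succ, Fin.val_zero]
      norm_num
    have hsub2 : ((Tmat (m+2)).submatrix Fin.succ (Fin.succ (0 : Fin (m+1))).succAbove).submatrix
        (0 : Fin (m+1)).succAbove Fin.succ = Tmat m := by
      rw [Fin.succAbove_zero, Matrix.submatrix_submatrix]
      refine Matrix.ext fun r c => ?_
      have hs : (Fin.succ (0 : Fin (m+1))).succAbove c.succ = c.succ.succ := by
        apply Fin.succAbove_of_le_castSucc
        simp [Fin.le_def]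
      simp only [Matrix.submatrix_apply, Function.comp_apply, hs]
      simp only [Tmat, Matrix.of_apply, te, Fin.val_succ]
      split_ifs <;> first | rfl | omega
    rw [hent, hsub2]
    simp
  rw [hminor]
  simp
  ring

lemma ppoly_eq (n : ℕ) : Ppoly n = (Tmat n).det := by
  cases n with
  | zero => simp [Ppoly, Matrix.det_fin_zero]
  | succ n =>
    rw [Ppoly, psiWord_eq, ← factor, Matrix.det_mul, detW, mul_one]

/-- Proposition 4.2: for `n ≥ 2`, `P_n(x) = −2 P_{n−1}(x) − x² P_{n−2}(x)`. -/
theorem stmt5 (n : ℕ) (hn : 2 ≤ n) :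
    Ppoly n = -2 * Ppoly (n-1) - (Polynomial.X : Polynomial ℤ)^2 * Ppoly (n-2) := by
  obtain ⟨m, rfl⟩ : ∃ m, n = m + 2 := ⟨n - 2, by omega⟩
  have h1 : m + 2 - 1 = m + 1 := by omega
  have h2 : m + 2 - 2 = m := by omega
  rw [h1, h2, ppoly_eq, ppoly_eq, ppoly_eq, detT_rec]
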